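/- Let M be a multiplicative submonoid of O_K that contains a unit of O_K of infinite multiplicative order. Then R_{K,M} is contained in the ring of integers of the field ℚ(M); that is, every x ∈ R_{K,M} lies in the subfield of K generated over ℚ by M. -/

import Mathlib

set_option maxHeartbeats 1000000
set_option synthInstance.maxHeartbeats 400000


noncomputable section

/-- A fixed algebraic closure of `ℚ`. -/
abbrev Qbar : Type := AlgebraicClosure ℚ

/-- The ring of integers of a subfield `K` of `ℚ̄`, viewed as a subset of `ℚ̄`. -/
def ringOfInt (K : IntermediateField ℚ Qbar) : Set Qbar :=
  {x | x ∈ K ∧ IsIntegral ℤ x}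

/-- `R_{K,M}` for a multiplicative submonoid `M ⊆ O_K`. -/
def RKM (K : IntermediateField ℚ Qbar) (M : Set Qbar) : Set Qbar :=
  {x | x ∈ ringOfInt K ∧ ∀ ε ∈ M, ∃ δ ∈ M, ∃ w ∈ ringOfInt K,
    δ - 1 = (ε - 1) * x + (ε - 1) ^ 2 * w}

section Aux

open Polynomial

lemma adjoin_pair_integral {u u' : Qbar} (hu : IsIntegral ℤ u) (hu' : IsIntegral ℤ u')
    {t : Qbar} (ht : t ∈ Algebra.adjoin ℤ ({u, u'} : Set Qbar)) : IsIntegral ℤ t := by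
  have h : Algebra.adjoin ℤ ({u, u'} : Set Qbar) ≤ integralClosure ℤ Qbar := by
    apply Algebra.adjoin_le
    intro v hv
    simp only [Set.mem_insert_iff, Set.mem_singleton_iff] at hv
    rcases hv with rfl | rfl
    · exact hu
    · exact hu'
  exact h ht

lemma coeff_zero_ne_zero' {y : Qbar} (hy : IsIntegral ℤ y) (hy0 : y ≠ 0) :
    (minpoly ℤ y).coeff 0 ≠ 0 := by
  intro h0
  have hPne : minpoly ℤ y ≠ 0 := minpoly.ne_zero hy
  have h1 : minpoly ℤ y = X * (minpoly ℤ y).divX := by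
    conv_lhs => rw [← Polynomial.X_mul_divX_add (minpoly ℤ y)]
    rw [h0, map_zero, add_zero]
  have h2 : (Polynomial.aeval y) (minpoly ℤ y) = 0 := minpoly.aeval ℤ y
  rw [h1] at h2
  simp only [map_mul, Polynomial.aeval_X] at h2
  have h3 : (Polynomial.aeval y) (minpoly ℤ y).divX = 0 := by
    rcases mul_eq_zero.mp h2 with h | h
    · exact absurd h hy0
    · exact h
  have hmonic : (minpoly ℤ y).divX.Monic := by
    have hlc : (minpoly ℤ y).leadingCoeff = (minpoly ℤ y).divX.leadingCoeff := by
      conv_lhs => rw [h1]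
      rw [leadingCoeff_mul, leadingCoeff_X, one_mul]
    unfold Polynomial.Monic
    rw [← hlc]
    exact minpoly.monic hy
  have hmin := minpoly.min ℤ y hmonic h3
  have hlt := Polynomial.degree_divX_lt hPne
  exact absurd (lt_of_le_of_lt hmin hlt) (lt_irrefl _)

lemma keyA {u u' y : Qbar} (hui : IsIntegral ℤ u) (hu'i : IsIntegral ℤ u')
    (huu' : u * u' = 1) (hord : ∀ n : ℕ, 0 < n → u ^ n ≠ 1)
    (hy : IsIntegral ℤ y)
    (hd : ∀ n : ℕ, 0 < n → ∃ z : Qbar, IsIntegral ℤ z ∧ y = (u ^ n - 1) * z) :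
    y = 0 := by
  by_contra hy0
  set m := (minpoly ℤ y).coeff 0 with hm
  have hm0 : m ≠ 0 := coeff_zero_ne_zero' hy hy0
  -- m = y * c for an integral c
  obtain ⟨c, hc_int, hmc⟩ : ∃ c, IsIntegral ℤ c ∧ (m : Qbar) = y * c := by
    refine ⟨-(Polynomial.aeval y (minpoly ℤ y).divX), ?_, ?_⟩
    · have h1 : (Polynomial.aeval y) (minpoly ℤ y).divX ∈ Algebra.adjoin ℤ ({y} : Set Qbar) :=
        Polynomial.aeval_mem_adjoin_singleton ℤ y
      have h2 : Algebra.adjoin ℤ ({y} : Set Qbar) ≤ integralClosure ℤ Qbar :=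
        Algebra.adjoin_le (Set.singleton_subset_iff.mpr hy)
      exact (h2 h1).neg
    · have h2 : (Polynomial.aeval y) (minpoly ℤ y) = 0 := minpoly.aeval ℤ y
      rw [← Polynomial.X_mul_divX_add (minpoly ℤ y)] at h2
      simp only [map_add, map_mul, Polynomial.aeval_X, Polynomial.aeval_C, ← hm,
        map_intCast, algebraMap_int_eq, eq_intCast] at h2
      linear_combination h2
  -- the finitely generated ring R = ℤ[u, u']
  set Rr := Algebra.adjoin ℤ ({u, u'} : Set Qbar) with hRr
  haveI hfin : Module.Finite ℤ ↥Rr := by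
    have hFG : (Subalgebra.toSubmodule Rr).FG := by
      apply fg_adjoin_of_finite (Set.toFinite _)
      intro v hv
      simp only [Set.mem_insert_iff, Set.mem_singleton_iff] at hv
      rcases hv with rfl | rfl
      · exact hui
      · exact hu'i
    exact Module.Finite.iff_fg.mpr hFG
  haveI : NoZeroSMulDivisors ℤ ↥Rr := by
    constructor
    intro c x h
    have h2 : (c : Qbar) * (x : Qbar) = 0 := by
      have := congrArg (Subalgebra.val Rr) h
      simpa [zsmul_eq_mul] using this
    rcases mul_eq_zero.mp h2 with h3 | h3
    · left; exact_mod_cast h3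
    · right; exact Subtype.ext (by simpa using h3)
  haveI : Module.Free ℤ ↥Rr := Module.free_of_finite_type_torsion_free'
  haveI : CharZero ↥Rr := by
    refine ⟨fun a b hab => ?_⟩
    have := congrArg (Subalgebra.val Rr) hab
    simp only [map_natCast] at this
    exact_mod_cast this
  -- choose a prime p not dividing m
  obtain ⟨p, hpge, hpp⟩ := Nat.exists_infinite_primes (m.natAbs + 1)
  have hpm : ¬ ((p : ℤ) ∣ m) := by
    intro hdvd
    have h1 : p ∣ m.natAbs := by
      have := Int.natAbs_dvd_natAbs.mpr hdvd
      simpa using this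
    have h2 : p ≤ m.natAbs := Nat.le_of_dvd (Int.natAbs_pos.mpr hm0) h1
    omega
  -- find n > 0 with u^n - 1 = p * t
  set I : Ideal ↥Rr := Ideal.span {(p : ↥Rr)} with hI
  have hIbot : I ≠ ⊥ := by
    rw [hI, Ne, Ideal.span_singleton_eq_bot]
    exact_mod_cast hpp.ne_zero
  haveI := Ideal.finiteQuotientOfFreeOfNeBot I hIbot
  have humem : u ∈ Rr := Algebra.subset_adjoin (by simp)
  have hu'mem : u' ∈ Rr := Algebra.subset_adjoin (by simp)
  set up : ↥Rr := ⟨u, humem⟩ with hup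
  set up' : ↥Rr := ⟨u', hu'mem⟩ with hup'
  have huu'R : up * up' = 1 := Subtype.ext (by simpa using huu')
  obtain ⟨n, hn, t, ht⟩ : ∃ n, 0 < n ∧ ∃ t : ↥Rr, up ^ n - 1 = (p : ↥Rr) * t := by
    have main : ∀ a b : ℕ, a < b →
        Ideal.Quotient.mk I (up ^ a) = Ideal.Quotient.mk I (up ^ b) →
        ∃ n, 0 < n ∧ ∃ t : ↥Rr, up ^ n - 1 = (p : ↥Rr) * t := by
      intro a b hab heq
      refine ⟨b - a, Nat.sub_pos_of_lt hab, ?_⟩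
      simp only [map_pow] at heq
      have e1 : (Ideal.Quotient.mk I up) ^ a * ((Ideal.Quotient.mk I up) ^ (b - a) - 1) = 0 := by
        rw [mul_sub, mul_one, ← pow_add, Nat.add_sub_cancel' hab.le, heq, sub_self]
      have e2 : (Ideal.Quotient.mk I up') ^ a *
          ((Ideal.Quotient.mk I up) ^ a * ((Ideal.Quotient.mk I up) ^ (b - a) - 1)) = 0 := by
        rw [e1, mul_zero]
      rw [← mul_assoc, ← mul_pow, ← map_mul, mul_comm up' up, huu'R, map_one, one_pow,
        one_mul] at e2
      have e3 : Ideal.Quotient.mk I (up ^ (b - a) - 1) = 0 := by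
        rw [map_sub, map_one, map_pow]; exact e2
      have e4 : up ^ (b - a) - 1 ∈ I := Ideal.Quotient.eq_zero_iff_mem.mp e3
      obtain ⟨t, ht⟩ := Ideal.mem_span_singleton'.mp e4
      exact ⟨t, by rw [← ht, mul_comm]⟩
    obtain ⟨a, b, hne, heq⟩ := Finite.exists_ne_map_eq_of_infinite
      (fun n : ℕ => Ideal.Quotient.mk I (up ^ n))
    rcases hne.lt_or_gt with h | h
    · exact main a b h heq
    · exact main b a h heq.symm
  -- coerce to Qbar
  have hcoe : (u ^ n - 1 : Qbar) = (p : Qbar) * (t : Qbar) := by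
    have := congrArg (Subalgebra.val Rr) ht
    simpa using this
  have ht_int : IsIntegral ℤ (t : Qbar) := adjoin_pair_integral hui hu'i t.2
  obtain ⟨z, hz_int, hz⟩ := hd n hn
  -- m = p * (t * z * c)
  have hmain : (m : Qbar) = (p : Qbar) * ((t : Qbar) * z * c) := by
    rw [hmc, hz, hcoe]; ring
  have hpQ : (p : ℚ) ≠ 0 := by exact_mod_cast hpp.ne_zero
  have hveq : algebraMap ℚ Qbar ((m : ℚ) / (p : ℚ)) = (t : Qbar) * z * c := by
    have hpQ2 : (algebraMap ℚ Qbar) (p : ℚ) ≠ 0 := by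
      rw [map_natCast]
      exact_mod_cast hpp.ne_zero
    rw [map_div₀, div_eq_iff hpQ2, map_intCast, map_natCast, hmain]
    ring
  have hint : IsIntegral ℤ ((m : ℚ) / (p : ℚ)) := by
    have h := (ht_int.mul hz_int).mul hc_int
    rw [← hveq] at h
    exact (isIntegral_algebraMap_iff (algebraMap ℚ Qbar).injective).mp h
  obtain ⟨k, hk⟩ := IsIntegrallyClosed.isIntegral_iff.mp hint
  apply hpm
  refine ⟨k, ?_⟩
  have hfin2 : (m : ℚ) = (p : ℚ) * (k : ℚ) := by
    have hk' : (k : ℚ) = (m : ℚ) / (p : ℚ) := by exact_mod_cast hk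
    rw [hk']
    field_simp
  exact_mod_cast hfin2

end Aux

theorem stmt1 (K : IntermediateField ℚ Qbar) (M : Set Qbar)
    (hMO : M ⊆ ringOfInt K) (hM1 : (1 : Qbar) ∈ M)
    (hMmul : ∀ a ∈ M, ∀ b ∈ M, a * b ∈ M)
    (hu : ∃ u ∈ M, (∃ u' ∈ ringOfInt K, u * u' = 1) ∧ ∀ n : ℕ, 0 < n → u ^ n ≠ 1) :
    ∀ x ∈ RKM K M, x ∈ ringOfInt (IntermediateField.adjoin ℚ M) := by
  obtain ⟨u, huM, ⟨u', hu'O, huu'⟩, hord⟩ := hu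
  intro x hx
  obtain ⟨⟨hxK, hxInt⟩, hrel⟩ := hx
  refine ⟨?_, hxInt⟩
  by_contra hxL
  set L := IntermediateField.adjoin ℚ M with hL
  haveI : Algebra.IsAlgebraic ↥L Qbar := by
    have : Algebra.IsAlgebraic ℚ Qbar := AlgebraicClosure.isAlgebraic ℚ
    exact Algebra.IsAlgebraic.tower_top (K := ℚ) ↥L
  haveI : IsAlgClosure ↥L Qbar := ⟨inferInstance, inferInstance⟩
  haveI : CharZero ↥L := charZero_of_injective_algebraMap (algebraMap ℚ ↥L).injective
  have hxbot : x ∉ (⊥ : Subalgebra ↥L Qbar) := by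
    intro h
    rw [Algebra.mem_bot] at h
    obtain ⟨l, hl⟩ := h
    rw [IntermediateField.algebraMap_apply] at hl
    exact hxL (hl ▸ l.2)
  have hsep : IsSeparable ↥L x := Algebra.IsSeparable.isSeparable ↥L x
  have hsplits : ((minpoly ↥L x).map (algebraMap ↥L Qbar)).Splits :=
    IsAlgClosed.splits ((minpoly ↥L x).map (algebraMap ↥L Qbar))
  obtain ⟨y', hxy', hconj⟩ := (notMem_iff_exists_ne_and_isConjRoot hsep hsplits).mp hxbot
  obtain ⟨σ, hσx⟩ := hconj.symm.exists_algEquiv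
  have hσxne : σ x ≠ x := by
    rw [hσx]
    exact fun h => hxy' h.symm
  have hσM : ∀ a ∈ M, σ a = a := by
    intro a ha
    have haL : a ∈ L := IntermediateField.subset_adjoin ℚ M ha
    have hc := σ.commutes ⟨a, haL⟩
    rwa [IntermediateField.algebraMap_apply] at hc
  have hy0 : σ x - x ≠ 0 := sub_ne_zero.mpr hσxne
  have hupow : ∀ n : ℕ, u ^ n ∈ M := by
    intro n
    induction n with
    | zero => simpa using hM1
    | succ k ih => rw [pow_succ]; exact hMmul _ ih _ huM
  have hσxInt : IsIntegral ℤ (σ x) := hxInt.map σ.toAlgHom.toRingHom.toIntAlgHom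
  have hdiv : ∀ n : ℕ, 0 < n → ∃ z : Qbar, IsIntegral ℤ z ∧ σ x - x = (u ^ n - 1) * z := by
    intro n hn
    obtain ⟨δ, hδ, w, hw, heq⟩ := hrel (u ^ n) (hupow n)
    have hσw : IsIntegral ℤ (σ w) := hw.2.map σ.toAlgHom.toRingHom.toIntAlgHom
    refine ⟨w - σ w, hw.2.sub hσw, ?_⟩
    have hε : u ^ n - 1 ≠ 0 := sub_ne_zero.mpr (hord n hn)
    apply mul_left_cancel₀ hε
    have h2 := congrArg σ heq
    simp only [map_sub, map_add, map_mul, map_one, map_pow] at h2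
    rw [hσM δ hδ, hσM u huM] at h2
    linear_combination heq - h2
  exact hy0 (keyA (hMO huM).2 hu'O.2 huu' hord (hσxInt.sub hxInt) hdiv)
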